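/- arXiv:2412.17080 — 4 statements merged into one kernel-verified Lean document; each statement's English description precedes it below -/
import Mathlib

section
/- Let V and C be types, r : V → V → Prop, and φ : V → Option C. If u v : V satisfy Relation.TransGen r u v, (φ u).isSome, and (φ v).isSome, then Relation.TransGen (fun a b => (φ b).isSome ∧ medAdj a b) u v; that is, any directed path between two mapped vertices decomposes into a chain of mediated adjacencies whose cut points are all mapped vertices. -/
def medAdj {V C : Type*} (r : V → V → Prop) (φ : V → Option C) (u v : V) : Prop :=
  ∃ l : List V, List.Chain r u (l ++ [v]) ∧ ∀ x ∈ l, φ x = none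

private lemma medAdj_extend {V C : Type*} {r : V → V → Prop} {φ : V → Option C}
    {w v v' : V} (h : medAdj r φ w v) (hv : φ v = none) (hr : r v v') :
    medAdj r φ w (v' : V) := by
  obtain ⟨l, hc, hn⟩ := h
  refine ⟨l ++ [v], ?_, ?_⟩
  · have : l ++ [v] ++ [v'] = l ++ v :: [v'] := by simp
    rw [this, List.Chain, List.isChain_cons_split]
    exact ⟨hc, List.Chain.cons hr List.Chain.nil⟩
  · intro x hx
    rcases List.mem_append.1 hx with h1 | h1
    · exact hn x h1
    · simp at h1; simpa [h1] using hv

theorem transGen_decomposes_into_mediated_adjacencies {V C : Type*}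
    (r : V → V → Prop) (φ : V → Option C) (u v : V)
    (h : Relation.TransGen r u v) (hu : (φ u).isSome) (hv : (φ v).isSome) :
    Relation.TransGen (fun a b => (φ b).isSome ∧ medAdj r φ a b) u v := by
  set good : V → V → Prop := fun a b => (φ b).isSome ∧ medAdj r φ a b with hgood
  suffices H : Relation.TransGen good u v ∨
      (φ v = none ∧ ∃ w, (φ w).isSome ∧ (Relation.TransGen good u w ∨ w = u) ∧
        medAdj r φ w v) by
    rcases H with H | ⟨hnone, _⟩
    · exact H
    · rw [hnone] at hv; simp at hv
  clear hv
  induction h with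
  | @single b hr =>
    by_cases hb : (φ b).isSome
    · exact Or.inl (Relation.TransGen.single ⟨hb, [], by simpa [List.Chain] using hr, by simp⟩)
    · refine Or.inr ⟨Option.not_isSome_iff_eq_none.1 hb, u, hu, Or.inr rfl,
        [], by simpa [List.Chain] using hr, by simp⟩
  | @tail b c h1 hr ih =>
    rcases ih with ih | ⟨hbnone, w, hw, hfront, hmed⟩
    · -- TransGen good u b, step r b c
      have hb : (φ b).isSome := by
        cases ih with
        | single h => exact h.1
        | tail _ h => exact h.1
      by_cases hc : (φ c).isSome
      · exact Or.inl (ih.tail ⟨hc, [], by simpa [List.Chain] using hr, by simp⟩)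
      · exact Or.inr ⟨Option.not_isSome_iff_eq_none.1 hc, b, hb, Or.inl ih,
          [], by simpa [List.Chain] using hr, by simp⟩
    · -- medAdj w b with φ b = none, extend
      have hmed' : medAdj r φ w c := medAdj_extend hmed hbnone hr
      by_cases hc : (φ c).isSome
      · have step : good w c := ⟨hc, hmed'⟩
        rcases hfront with hf | hf
        · exact Or.inl (hf.tail step)
        · subst hf; exact Or.inl (Relation.TransGen.single step)
      · exact Or.inr ⟨Option.not_isSome_iff_eq_none.1 hc, w, hw, hfront, hmed'⟩
end

section
/- Let V and C be types, r : V → V → Prop, and φ : V → Option C, with PCDAG edge relation rC c d := c ≠ d ∧ ∃ u v : V, φ u = some c ∧ φ v = some d ∧ medAdj u v. If u v : V and c d : C satisfy Relation.TransGen r u v, φ u = some c, φ v = some d, and c ≠ d, then Relation.TransGen rC c d; that is, a directed path from u to v in the base graph yields a directed path from the cluster of u to the cluster of v in the PCDAG. -/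
theorem pcdag_preserves_directed_paths {V C : Type*}
    (r : V → V → Prop) (φ : V → Option C)
    (rC : C → C → Prop)
    (hrC : ∀ c d, rC c d ↔
      (c ≠ d ∧ ∃ u v : V, φ u = some c ∧ φ v = some d ∧ medAdj r φ u v))
    (u v : V) (c d : C)
    (h : Relation.TransGen r u v) (hu : φ u = some c) (hv : φ v = some d)
    (hcd : c ≠ d) :
    Relation.TransGen rC c d := by
  have key : ∀ {v' : V}, Relation.TransGen r u v' →
      ∃ e w l, φ w = some e ∧ Relation.ReflTransGen rC c e ∧
        List.Chain r w (l ++ [v']) ∧ (∀ x ∈ l, φ x = none) := by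
    intro v' h'
    induction h' with
    | single h1 =>
      exact ⟨c, u, [], hu, .refl, by simpa using List.Chain.cons h1 List.Chain.nil, by simp⟩
    | @tail b v' h2 h3 ih =>
      obtain ⟨e, w, l, hw, hce, hchain, hnone⟩ := ih
      cases hb : φ b with
      | none =>
        refine ⟨e, w, l ++ [b], hw, hce, ?_, ?_⟩
        · rw [List.append_assoc]
          exact List.isChain_cons_split.mpr ⟨hchain, List.Chain.cons h3 List.Chain.nil⟩
        · intro x hx
          rcases List.mem_append.mp hx with hx | hx
          · exact hnone x hx
          · simp at hx; subst hx; exact hb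
      | some f =>
        have hcf : Relation.ReflTransGen rC c f := by
          by_cases hef : e = f
          · subst hef; exact hce
          · exact hce.tail ((hrC e f).mpr ⟨hef, w, b, hw, hb, ⟨l, hchain, hnone⟩⟩)
        exact ⟨f, b, [], hb, hcf, by simpa using List.Chain.cons h3 List.Chain.nil, by simp⟩
  obtain ⟨e, w, l, hw, hce, hchain, hnone⟩ := key h
  have hrt : Relation.ReflTransGen rC c d := by
    by_cases hed : e = d
    · subst hed; exact hce
    · exact hce.tail ((hrC e d).mpr ⟨hed, w, v, hw, hv, ⟨l, hchain, hnone⟩⟩)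
  rcases hrt.cases_head with h' | ⟨b, hb, hbd⟩
  · exact absurd h' hcd
  · exact Relation.TransGen.head' hb hbd
end

section
/- Let V and C be types, r : V → V → Prop, and φ : V → C a (total) clustering map, with cluster edge relation rC c d := c ≠ d ∧ ∃ u v : V, φ u = c ∧ φ v = d ∧ r u v. If u v : V satisfy Relation.TransGen r u v and φ u ≠ φ v, then Relation.TransGen rC (φ u) (φ v); that is, Cluster DAGs preserve directed paths between vertices lying in distinct clusters. -/
private lemma cdag_aux {V C : Type*}
    (r : V → V → Prop) (φ : V → C)
    (rC : C → C → Prop)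
    (hrC : ∀ c d, rC c d ↔ (c ≠ d ∧ ∃ u v : V, φ u = c ∧ φ v = d ∧ r u v))
    (u v : V) (h : Relation.TransGen r u v) :
    φ u = φ v ∨ Relation.TransGen rC (φ u) (φ v) := by
  induction h with
  | single hr =>
    rename_i b
    by_cases hb : φ u = φ b
    · exact Or.inl hb
    · exact Or.inr (Relation.TransGen.single
        ((hrC _ _).mpr ⟨hb, u, b, rfl, rfl, hr⟩))
  | tail hab hr ih =>
    rename_i b c
    by_cases hc : φ b = φ c
    · exact hc ▸ ih
    · have step : rC (φ b) (φ c) := (hrC _ _).mpr ⟨hc, b, c, rfl, rfl, hr⟩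
      rcases ih with h1 | h1
      · exact Or.inr (h1 ▸ Relation.TransGen.single step)
      · exact Or.inr (h1.tail step)

theorem cdag_preserves_directed_paths {V C : Type*}
    (r : V → V → Prop) (φ : V → C)
    (rC : C → C → Prop)
    (hrC : ∀ c d, rC c d ↔ (c ≠ d ∧ ∃ u v : V, φ u = c ∧ φ v = d ∧ r u v))
    (u v : V)
    (h : Relation.TransGen r u v) (hne : φ u ≠ φ v) :
    Relation.TransGen rC (φ u) (φ v) :=
  (cdag_aux r φ rC hrC u v h).resolve_left hne
end

section
/- Let A, B, A', B' be measurable spaces with A' having measurable singletons, let f : A → A' and g : B → B' be measurable, let μ be a probability measure on A × B, and let a' : A' satisfy μ ((fun x : A × B => f x.1) ⁻¹' {a'}) ≠ 0. Then Measure.map Prod.snd (ProbabilityTheory.cond (Measure.map (Prod.map f g) μ) (Prod.fst ⁻¹' {a'})) = Measure.map g (Measure.map Prod.snd (ProbabilityTheory.cond μ ((fun x : A × B => f x.1) ⁻¹' {a'}))); that is, the conditional distribution of the abstracted effect variable given the abstracted cause value a' equals the pushforward under g of the base conditional distribution of the effect variables given that the base cause variables lie in the preimage of a'. -/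
open MeasureTheory ProbabilityTheory

theorem abstraction_conditioning_commutes
    {A B A' B' : Type*} [MeasurableSpace A] [MeasurableSpace B]
    [MeasurableSpace A'] [MeasurableSpace B'] [MeasurableSingletonClass A']
    (f : A → A') (g : B → B') (hf : Measurable f) (hg : Measurable g)
    (μ : Measure (A × B)) [IsProbabilityMeasure μ]
    (a' : A') (hns : μ ((fun x : A × B => f x.1) ⁻¹' {a'}) ≠ 0) :
    Measure.map Prod.snd
        (ProbabilityTheory.cond (Measure.map (Prod.map f g) μ) (Prod.fst ⁻¹' {a'})) =
      Measure.map g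
        (Measure.map Prod.snd
          (ProbabilityTheory.cond μ ((fun x : A × B => f x.1) ⁻¹' {a'}))) := by
  have hmap : Measurable (Prod.map f g) := hf.prodMap hg
  have hs : MeasurableSet (Prod.fst ⁻¹' {a'} : Set (A' × B')) :=
    measurable_fst (MeasurableSet.singleton a')
  have hpre : (Prod.map f g) ⁻¹' (Prod.fst ⁻¹' {a'}) = (fun x : A × B => f x.1) ⁻¹' {a'} := by
    ext x; simp [Prod.map]
  have hcond : ProbabilityTheory.cond (Measure.map (Prod.map f g) μ) (Prod.fst ⁻¹' {a'})
      = Measure.map (Prod.map f g)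
        (ProbabilityTheory.cond μ ((fun x : A × B => f x.1) ⁻¹' {a'})) := by
    unfold ProbabilityTheory.cond
    rw [Measure.restrict_map hmap hs, hpre, Measure.map_apply hmap hs, hpre,
      Measure.map_smul]
  rw [hcond, Measure.map_map measurable_snd hmap,
    Measure.map_map hg measurable_snd]
  rfl
end
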